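/- arXiv:math/0610231 — 3 statements merged into one kernel-verified Lean document; each statement's English description precedes it below -/
import Mathlib

section
/- The normal closure in SL(3,ℤ) of the cyclic subgroup of order 3 generated by the permutation matrix of the 3-cycle (i.e., the matrix with rows (0,0,1),(1,0,0),(0,1,0)) is all of SL(3,ℤ). -/
/-- The permutation matrix of the 3-cycle `e₁ ↦ e₂ ↦ e₃ ↦ e₁`, as an element of `SL(3,ℤ)`. -/
def threeCycleSL3 : Matrix.SpecialLinearGroup (Fin 3) ℤ :=
  ⟨!![0, 0, 1; 1, 0, 0; 0, 1, 0], by rw [Matrix.det_fin_three]; decide⟩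

namespace SL3NCAux

open Matrix

abbrev G := Matrix.SpecialLinearGroup (Fin 3) ℤ

abbrev N : Subgroup G := Subgroup.normalClosure ({threeCycleSL3} : Set G)

/-- Elementary matrices. -/
def E01 (a : ℤ) : G := ⟨!![1, a, 0; 0, 1, 0; 0, 0, 1], by simp [Matrix.det_fin_three]⟩
def E02 (a : ℤ) : G := ⟨!![1, 0, a; 0, 1, 0; 0, 0, 1], by simp [Matrix.det_fin_three]⟩
def E10 (a : ℤ) : G := ⟨!![1, 0, 0; a, 1, 0; 0, 0, 1], by simp [Matrix.det_fin_three]⟩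
def E12 (a : ℤ) : G := ⟨!![1, 0, 0; 0, 1, a; 0, 0, 1], by simp [Matrix.det_fin_three]⟩
def E20 (a : ℤ) : G := ⟨!![1, 0, 0; 0, 1, 0; a, 0, 1], by simp [Matrix.det_fin_three]⟩
def E21 (a : ℤ) : G := ⟨!![1, 0, 0; 0, 1, 0; 0, a, 1], by simp [Matrix.det_fin_three]⟩

lemma conj_mem {x : G} (hx : x ∈ N) (g : G) : g * x * g⁻¹ ∈ N :=
  Subgroup.normalClosure_normal.conj_mem x hx g

lemma hc_mem : threeCycleSL3 ∈ N :=
  Subgroup.subset_normalClosure (Set.mem_singleton _)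

/-- `E02 1` is in the normal closure, via an explicit commutator word. -/
lemma hE02_one : E02 1 ∈ N := by
  have hu : E01 1 * threeCycleSL3 * (E01 1)⁻¹ * threeCycleSL3⁻¹ ∈ N :=
    mul_mem (conj_mem hc_mem (E01 1)) (inv_mem hc_mem)
  have key : E02 1 = (E01 1 * threeCycleSL3 * (E01 1)⁻¹ * threeCycleSL3⁻¹) *
      (E01 1 * (E01 1 * threeCycleSL3 * (E01 1)⁻¹ * threeCycleSL3⁻¹)⁻¹ * (E01 1)⁻¹) := by
    apply Subtype.ext; decide
  rw [key]
  exact mul_mem hu (conj_mem (inv_mem hu) (E01 1))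

lemma hE10_one : E10 1 ∈ N := by
  have key : E10 1 = threeCycleSL3 * E02 1 * threeCycleSL3⁻¹ := by apply Subtype.ext; decide
  rw [key]; exact conj_mem hE02_one _

lemma hE21_one : E21 1 ∈ N := by
  have key : E21 1 = threeCycleSL3 * E10 1 * threeCycleSL3⁻¹ := by apply Subtype.ext; decide
  rw [key]; exact conj_mem hE10_one _

lemma hE01_one : E01 1 ∈ N := by
  have key : E01 1 = E02 1 * (E21 1 * (E02 1)⁻¹ * (E21 1)⁻¹) := by apply Subtype.ext; decide
  rw [key]; exact mul_mem hE02_one (conj_mem (inv_mem hE02_one) _)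

lemma hE12_one : E12 1 ∈ N := by
  have key : E12 1 = threeCycleSL3 * E01 1 * threeCycleSL3⁻¹ := by apply Subtype.ext; decide
  rw [key]; exact conj_mem hE01_one _

lemma hE20_one : E20 1 ∈ N := by
  have key : E20 1 = threeCycleSL3 * E12 1 * threeCycleSL3⁻¹ := by apply Subtype.ext; decide
  rw [key]; exact conj_mem hE12_one _

/-- From membership of `E 1`, get membership of `E a` for all `a`, for an additive family. -/
lemma mem_param {E : ℤ → G} (hadd : ∀ a b : ℤ, E a * E b = E (a + b)) (h0 : E 0 = 1)
    (h1 : E 1 ∈ N) : ∀ a : ℤ, E a ∈ N := by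
  have hneg : ∀ a : ℤ, E a ∈ N → E (-a) ∈ N := by
    intro a ha
    have h : E (-a) = (E a)⁻¹ := by
      apply eq_inv_of_mul_eq_one_left
      rw [hadd]; simpa using h0
    rw [h]; exact inv_mem ha
  intro a
  induction a using Int.induction_on with
  | zero => rw [h0]; exact one_mem _
  | succ n ih => rw [show ((n : ℤ) + 1) = (n : ℤ) + 1 from rfl, ← hadd]; exact mul_mem ih h1
  | pred n ih =>
      rw [show (-(n : ℤ) - 1) = (-(n : ℤ)) + (-1) by ring, ← hadd]
      exact mul_mem ih (hneg 1 h1)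

lemma E01_add (a b : ℤ) : E01 a * E01 b = E01 (a + b) := by
  apply Subtype.ext
  rw [Matrix.SpecialLinearGroup.coe_mul]
  ext i j
  fin_cases i <;> fin_cases j <;>
    simp [E01, Matrix.mul_apply, Fin.sum_univ_three, Matrix.vecHead, Matrix.vecTail] <;> ring

lemma E02_add (a b : ℤ) : E02 a * E02 b = E02 (a + b) := by
  apply Subtype.ext
  rw [Matrix.SpecialLinearGroup.coe_mul]
  ext i j
  fin_cases i <;> fin_cases j <;>
    simp [E02, Matrix.mul_apply, Fin.sum_univ_three, Matrix.vecHead, Matrix.vecTail] <;> ring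

lemma E12_add (a b : ℤ) : E12 a * E12 b = E12 (a + b) := by
  apply Subtype.ext
  rw [Matrix.SpecialLinearGroup.coe_mul]
  ext i j
  fin_cases i <;> fin_cases j <;>
    simp [E12, Matrix.mul_apply, Fin.sum_univ_three, Matrix.vecHead, Matrix.vecTail] <;> ring

lemma hE01 (a : ℤ) : E01 a ∈ N := mem_param E01_add (by apply Subtype.ext; decide) hE01_one a
lemma hE02 (a : ℤ) : E02 a ∈ N := mem_param E02_add (by apply Subtype.ext; decide) hE02_one a
lemma hE12 (a : ℤ) : E12 a ∈ N := mem_param E12_add (by apply Subtype.ext; decide) hE12_one a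

lemma hE10_neg_one : E10 (-1) ∈ N := by
  have key : E10 (-1) = (E10 1)⁻¹ := by apply Subtype.ext; decide
  rw [key]; exact inv_mem hE10_one

lemma hE20_neg_one : E20 (-1) ∈ N := by
  have key : E20 (-1) = (E20 1)⁻¹ := by apply Subtype.ext; decide
  rw [key]; exact inv_mem hE20_one

lemma hE21_neg_one : E21 (-1) ∈ N := by
  have key : E21 (-1) = (E21 1)⁻¹ := by apply Subtype.ext; decide
  rw [key]; exact inv_mem hE21_one

/-- Signed swap matrices. -/
def S01 : G := ⟨!![0, 1, 0; -1, 0, 0; 0, 0, 1], by simp [Matrix.det_fin_three]⟩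
def S02 : G := ⟨!![0, 0, 1; 0, 1, 0; -1, 0, 0], by simp [Matrix.det_fin_three]⟩
def S12 : G := ⟨!![1, 0, 0; 0, 0, 1; 0, -1, 0], by simp [Matrix.det_fin_three]⟩
def D01 : G := ⟨!![-1, 0, 0; 0, -1, 0; 0, 0, 1], by simp [Matrix.det_fin_three]⟩
def D12 : G := ⟨!![1, 0, 0; 0, -1, 0; 0, 0, -1], by simp [Matrix.det_fin_three]⟩

lemma hS01 : S01 ∈ N := by
  have key : S01 = E01 1 * E10 (-1) * E01 1 := by apply Subtype.ext; decide
  rw [key]; exact mul_mem (mul_mem hE01_one hE10_neg_one) hE01_one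

lemma hS02 : S02 ∈ N := by
  have key : S02 = E02 1 * E20 (-1) * E02 1 := by apply Subtype.ext; decide
  rw [key]; exact mul_mem (mul_mem hE02_one hE20_neg_one) hE02_one

lemma hS12 : S12 ∈ N := by
  have key : S12 = E12 1 * E21 (-1) * E12 1 := by apply Subtype.ext; decide
  rw [key]; exact mul_mem (mul_mem hE12_one hE21_neg_one) hE12_one

lemma hD01 : D01 ∈ N := by
  have key : D01 = S01 * S01 := by apply Subtype.ext; decide
  rw [key]; exact mul_mem hS01 hS01

lemma hD12 : D12 ∈ N := by
  have key : D12 = S12 * S12 := by apply Subtype.ext; decide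
  rw [key]; exact mul_mem hS12 hS12

/-- Combined row operation matrices used in the Euclidean reduction. -/
def W1 (q : ℤ) : G := ⟨!![0, 0, 1; 0, 1, 0; -1, 0, q], by simp [Matrix.det_fin_three]⟩
def W2 (q : ℤ) : G := ⟨!![0, 1, 0; -1, q, 0; 0, 0, 1], by simp [Matrix.det_fin_three]⟩
def W3 (q : ℤ) : G := ⟨!![1, 0, 0; 0, 0, 1; 0, -1, q], by simp [Matrix.det_fin_three]⟩
def U (b c : ℤ) : G := ⟨!![1, b, c; 0, 1, 0; 0, 0, 1], by simp [Matrix.det_fin_three]⟩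

lemma hW1 (q : ℤ) : W1 q ∈ N := by
  have key : W1 q = S02 * E02 (-q) := by
    apply Subtype.ext
    rw [Matrix.SpecialLinearGroup.coe_mul]
    ext i j
    fin_cases i <;> fin_cases j <;>
      simp [W1, S02, E02, Matrix.mul_apply, Fin.sum_univ_three, Matrix.vecHead, Matrix.vecTail] <;> ring
  rw [key]; exact mul_mem hS02 (hE02 _)

lemma hW2 (q : ℤ) : W2 q ∈ N := by
  have key : W2 q = S01 * E01 (-q) := by
    apply Subtype.ext
    rw [Matrix.SpecialLinearGroup.coe_mul]
    ext i j
    fin_cases i <;> fin_cases j <;>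
      simp [W2, S01, E01, Matrix.mul_apply, Fin.sum_univ_three, Matrix.vecHead, Matrix.vecTail] <;> ring
  rw [key]; exact mul_mem hS01 (hE01 _)

lemma hW3 (q : ℤ) : W3 q ∈ N := by
  have key : W3 q = S12 * E12 (-q) := by
    apply Subtype.ext
    rw [Matrix.SpecialLinearGroup.coe_mul]
    ext i j
    fin_cases i <;> fin_cases j <;>
      simp [W3, S12, E12, Matrix.mul_apply, Fin.sum_univ_three, Matrix.vecHead, Matrix.vecTail] <;> ring
  rw [key]; exact mul_mem hS12 (hE12 _)

lemma hU (b c : ℤ) : U b c ∈ N := by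
  have key : U b c = E01 b * E02 c := by
    apply Subtype.ext
    rw [Matrix.SpecialLinearGroup.coe_mul]
    ext i j
    fin_cases i <;> fin_cases j <;>
      simp [U, E01, E02, Matrix.mul_apply, Fin.sum_univ_three, Matrix.vecHead, Matrix.vecTail] <;> ring
  rw [key]; exact mul_mem (hE01 _) (hE02 _)

lemma natAbs_emod_lt (a : ℤ) {b : ℤ} (hb : b ≠ 0) : (a % b).natAbs < b.natAbs := by
  have h1 : 0 ≤ a % b := Int.emod_nonneg a hb
  have h2 : a % b < |b| := Int.emod_lt_abs a hb
  rw [Int.abs_eq_natAbs] at h2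
  omega

/-- Stage 3 base case: if the matrix has first row and column `(1,0,0)` and `B 2 1 = 0`,
then it is (up to a sign matrix) an elementary matrix. -/
lemma stage3_base (B : G) (h00 : (B : Matrix (Fin 3) (Fin 3) ℤ) 0 0 = 1)
    (h01 : (B : Matrix (Fin 3) (Fin 3) ℤ) 0 1 = 0) (h02 : (B : Matrix (Fin 3) (Fin 3) ℤ) 0 2 = 0)
    (h10 : (B : Matrix (Fin 3) (Fin 3) ℤ) 1 0 = 0) (h20 : (B : Matrix (Fin 3) (Fin 3) ℤ) 2 0 = 0)
    (h21 : (B : Matrix (Fin 3) (Fin 3) ℤ) 2 1 = 0) : B ∈ N := by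
  have hdet : (B : Matrix (Fin 3) (Fin 3) ℤ).det = 1 := B.2
  rw [Matrix.det_fin_three] at hdet
  rw [h00, h01, h02, h10, h20, h21] at hdet
  simp only [one_mul, zero_mul, mul_zero, sub_zero, add_zero, mul_one] at hdet
  -- hdet : B 1 1 * B 2 2 = 1
  have hunit : IsUnit ((B : Matrix (Fin 3) (Fin 3) ℤ) 1 1) :=
    IsUnit.of_mul_eq_one _ hdet
  rcases Int.isUnit_iff.mp hunit with h11 | h11
  · have h22 : (B : Matrix (Fin 3) (Fin 3) ℤ) 2 2 = 1 := by
      rw [h11, one_mul] at hdet; exact hdet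
    have key : B = E12 ((B : Matrix (Fin 3) (Fin 3) ℤ) 1 2) := by
      apply Subtype.ext
      ext i j
      fin_cases i <;> fin_cases j <;>
        simp [E12, Matrix.vecHead, Matrix.vecTail, h00, h01, h02, h10, h11, h20, h21, h22] <;> rfl
    rw [key]; exact hE12 _
  · have h22 : (B : Matrix (Fin 3) (Fin 3) ℤ) 2 2 = -1 := by
      rw [h11] at hdet; omega
    have key : B = D12 * E12 (-((B : Matrix (Fin 3) (Fin 3) ℤ) 1 2)) := by
      apply Subtype.ext
      rw [Matrix.SpecialLinearGroup.coe_mul]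
      ext i j
      fin_cases i <;> fin_cases j <;>
        simp [D12, E12, Matrix.mul_apply, Fin.sum_univ_three, Matrix.vecHead, Matrix.vecTail,
          h00, h01, h02, h10, h11, h20, h21, h22]
    rw [key]; exact mul_mem hD12 (hE12 _)

/-- Stage 3: Euclidean algorithm on the entries `B 1 1`, `B 2 1`. -/
lemma stage3 : ∀ (n : ℕ) (B : G), ((B : Matrix (Fin 3) (Fin 3) ℤ) 2 1).natAbs ≤ n →
    (B : Matrix (Fin 3) (Fin 3) ℤ) 0 0 = 1 → (B : Matrix (Fin 3) (Fin 3) ℤ) 0 1 = 0 →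
    (B : Matrix (Fin 3) (Fin 3) ℤ) 0 2 = 0 → (B : Matrix (Fin 3) (Fin 3) ℤ) 1 0 = 0 →
    (B : Matrix (Fin 3) (Fin 3) ℤ) 2 0 = 0 → B ∈ N := by
  intro n
  induction n with
  | zero =>
      intro B hle h00 h01 h02 h10 h20
      exact stage3_base B h00 h01 h02 h10 h20 (by omega)
  | succ n ih =>
      intro B hle h00 h01 h02 h10 h20
      by_cases h21 : (B : Matrix (Fin 3) (Fin 3) ℤ) 2 1 = 0
      · exact stage3_base B h00 h01 h02 h10 h20 h21
      · set q : ℤ := (B : Matrix (Fin 3) (Fin 3) ℤ) 1 1 / (B : Matrix (Fin 3) (Fin 3) ℤ) 2 1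
          with hq
        set C : G := W3 q * B with hC
        have entry : ∀ i j, (C : Matrix (Fin 3) (Fin 3) ℤ) i j =
            (!![1, 0, 0; 0, 0, 1; 0, -1, q] * (B : Matrix (Fin 3) (Fin 3) ℤ)) i j := by
          intro i j
          rw [hC, Matrix.SpecialLinearGroup.coe_mul]
          rfl
        have c00 : (C : Matrix (Fin 3) (Fin 3) ℤ) 0 0 = 1 := by
          rw [entry]; simp [Matrix.mul_apply, Fin.sum_univ_three, Matrix.vecHead, Matrix.vecTail, h00]
        have c01 : (C : Matrix (Fin 3) (Fin 3) ℤ) 0 1 = 0 := by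
          rw [entry]; simp [Matrix.mul_apply, Fin.sum_univ_three, Matrix.vecHead, Matrix.vecTail, h01]
        have c02 : (C : Matrix (Fin 3) (Fin 3) ℤ) 0 2 = 0 := by
          rw [entry]; simp [Matrix.mul_apply, Fin.sum_univ_three, Matrix.vecHead, Matrix.vecTail, h02]
        have c10 : (C : Matrix (Fin 3) (Fin 3) ℤ) 1 0 = 0 := by
          rw [entry]; simp [Matrix.mul_apply, Fin.sum_univ_three, Matrix.vecHead, Matrix.vecTail, h20]
        have c20 : (C : Matrix (Fin 3) (Fin 3) ℤ) 2 0 = 0 := by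
          rw [entry]; simp [Matrix.mul_apply, Fin.sum_univ_three, Matrix.vecHead, Matrix.vecTail, h10, h20]
        have c21 : (C : Matrix (Fin 3) (Fin 3) ℤ) 2 1 =
            -((B : Matrix (Fin 3) (Fin 3) ℤ) 1 1 % (B : Matrix (Fin 3) (Fin 3) ℤ) 2 1) := by
          rw [entry]
          simp [Matrix.mul_apply, Fin.sum_univ_three, Matrix.vecHead, Matrix.vecTail]
          rw [hq]
          linear_combination Int.mul_ediv_add_emod ((B : Matrix (Fin 3) (Fin 3) ℤ) 1 1)
            ((B : Matrix (Fin 3) (Fin 3) ℤ) 2 1)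
        have hlt : ((C : Matrix (Fin 3) (Fin 3) ℤ) 2 1).natAbs ≤ n := by
          rw [c21]
          have := natAbs_emod_lt ((B : Matrix (Fin 3) (Fin 3) ℤ) 1 1) h21
          omega
        have hCN : C ∈ N := ih C hlt c00 c01 c02 c10 c20
        have : (W3 q)⁻¹ * C ∈ N := mul_mem (inv_mem (hW3 q)) hCN
        simpa [hC] using this

/-- Stage 2 base, positive pivot: first column is `(1,0,0)`; clear the first row
and hand over to stage 3. -/
lemma stage2_pos (B : G) (h00 : (B : Matrix (Fin 3) (Fin 3) ℤ) 0 0 = 1)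
    (h10 : (B : Matrix (Fin 3) (Fin 3) ℤ) 1 0 = 0)
    (h20 : (B : Matrix (Fin 3) (Fin 3) ℤ) 2 0 = 0) : B ∈ N := by
  set b : ℤ := -((B : Matrix (Fin 3) (Fin 3) ℤ) 0 1) with hb
  set c : ℤ := -((B : Matrix (Fin 3) (Fin 3) ℤ) 0 2) with hcc
  set C : G := B * U b c with hC
  have entry : ∀ i j, (C : Matrix (Fin 3) (Fin 3) ℤ) i j =
      ((B : Matrix (Fin 3) (Fin 3) ℤ) * !![1, b, c; 0, 1, 0; 0, 0, 1]) i j := by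
    intro i j
    rw [hC, Matrix.SpecialLinearGroup.coe_mul]
    rfl
  have c00 : (C : Matrix (Fin 3) (Fin 3) ℤ) 0 0 = 1 := by
    rw [entry]; simp [Matrix.mul_apply, Fin.sum_univ_three, Matrix.vecHead, Matrix.vecTail, h00]
  have c01 : (C : Matrix (Fin 3) (Fin 3) ℤ) 0 1 = 0 := by
    rw [entry]; simp [Matrix.mul_apply, Fin.sum_univ_three, Matrix.vecHead, Matrix.vecTail, h00, hb]
  have c02 : (C : Matrix (Fin 3) (Fin 3) ℤ) 0 2 = 0 := by
    rw [entry]; simp [Matrix.mul_apply, Fin.sum_univ_three, Matrix.vecHead, Matrix.vecTail, h00, hcc]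
  have c10 : (C : Matrix (Fin 3) (Fin 3) ℤ) 1 0 = 0 := by
    rw [entry]; simp [Matrix.mul_apply, Fin.sum_univ_three, Matrix.vecHead, Matrix.vecTail, h10]
  have c20 : (C : Matrix (Fin 3) (Fin 3) ℤ) 2 0 = 0 := by
    rw [entry]; simp [Matrix.mul_apply, Fin.sum_univ_three, Matrix.vecHead, Matrix.vecTail, h20]
  have hCN : C ∈ N := stage3 _ C le_rfl c00 c01 c02 c10 c20
  have : C * (U b c)⁻¹ ∈ N := mul_mem hCN (inv_mem (hU b c))
  simpa [hC] using this

/-- Stage 2 base: `B 1 0 = B 2 0 = 0` forces `B 0 0 = ±1`. -/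
lemma stage2_base (B : G) (h10 : (B : Matrix (Fin 3) (Fin 3) ℤ) 1 0 = 0)
    (h20 : (B : Matrix (Fin 3) (Fin 3) ℤ) 2 0 = 0) : B ∈ N := by
  have hdet : (B : Matrix (Fin 3) (Fin 3) ℤ).det = 1 := B.2
  rw [Matrix.det_fin_three] at hdet
  rw [h10, h20] at hdet
  have hunit : IsUnit ((B : Matrix (Fin 3) (Fin 3) ℤ) 0 0) := by
    apply IsUnit.of_mul_eq_one ((B : Matrix (Fin 3) (Fin 3) ℤ) 1 1 *
      (B : Matrix (Fin 3) (Fin 3) ℤ) 2 2 - (B : Matrix (Fin 3) (Fin 3) ℤ) 1 2 *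
      (B : Matrix (Fin 3) (Fin 3) ℤ) 2 1)
    linear_combination hdet
  rcases Int.isUnit_iff.mp hunit with h00 | h00
  · exact stage2_pos B h00 h10 h20
  · set C : G := D01 * B with hC
    have entry : ∀ i j, (C : Matrix (Fin 3) (Fin 3) ℤ) i j =
        (!![(-1 : ℤ), 0, 0; 0, -1, 0; 0, 0, 1] * (B : Matrix (Fin 3) (Fin 3) ℤ)) i j := by
      intro i j
      rw [hC, Matrix.SpecialLinearGroup.coe_mul]
      rfl
    have c00 : (C : Matrix (Fin 3) (Fin 3) ℤ) 0 0 = 1 := by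
      rw [entry]; simp [Matrix.mul_apply, Fin.sum_univ_three, Matrix.vecHead, Matrix.vecTail, h00]
    have c10 : (C : Matrix (Fin 3) (Fin 3) ℤ) 1 0 = 0 := by
      rw [entry]; simp [Matrix.mul_apply, Fin.sum_univ_three, Matrix.vecHead, Matrix.vecTail, h10]
    have c20 : (C : Matrix (Fin 3) (Fin 3) ℤ) 2 0 = 0 := by
      rw [entry]; simp [Matrix.mul_apply, Fin.sum_univ_three, Matrix.vecHead, Matrix.vecTail, h20]
    have hCN : C ∈ N := stage2_pos C c00 c10 c20
    have : D01⁻¹ * C ∈ N := mul_mem (inv_mem hD01) hCN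
    simpa [hC] using this

/-- Stage 2: Euclidean algorithm on the entries `B 0 0`, `B 1 0`, keeping `B 2 0 = 0`. -/
lemma stage2 : ∀ (n : ℕ) (B : G), ((B : Matrix (Fin 3) (Fin 3) ℤ) 1 0).natAbs ≤ n →
    (B : Matrix (Fin 3) (Fin 3) ℤ) 2 0 = 0 → B ∈ N := by
  intro n
  induction n with
  | zero =>
      intro B hle h20
      exact stage2_base B (by omega) h20
  | succ n ih =>
      intro B hle h20
      by_cases h10 : (B : Matrix (Fin 3) (Fin 3) ℤ) 1 0 = 0
      · exact stage2_base B h10 h20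
      · set q : ℤ := (B : Matrix (Fin 3) (Fin 3) ℤ) 0 0 / (B : Matrix (Fin 3) (Fin 3) ℤ) 1 0
          with hq
        set C : G := W2 q * B with hC
        have entry : ∀ i j, (C : Matrix (Fin 3) (Fin 3) ℤ) i j =
            (!![0, 1, 0; -1, q, 0; 0, 0, 1] * (B : Matrix (Fin 3) (Fin 3) ℤ)) i j := by
          intro i j
          rw [hC, Matrix.SpecialLinearGroup.coe_mul]
          rfl
        have c20 : (C : Matrix (Fin 3) (Fin 3) ℤ) 2 0 = 0 := by
          rw [entry]; simp [Matrix.mul_apply, Fin.sum_univ_three, Matrix.vecHead, Matrix.vecTail, h20]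
        have c10 : (C : Matrix (Fin 3) (Fin 3) ℤ) 1 0 =
            -((B : Matrix (Fin 3) (Fin 3) ℤ) 0 0 % (B : Matrix (Fin 3) (Fin 3) ℤ) 1 0) := by
          rw [entry]
          simp [Matrix.mul_apply, Fin.sum_univ_three, Matrix.vecHead, Matrix.vecTail]
          rw [hq]
          linear_combination Int.mul_ediv_add_emod ((B : Matrix (Fin 3) (Fin 3) ℤ) 0 0)
            ((B : Matrix (Fin 3) (Fin 3) ℤ) 1 0)
        have hlt : ((C : Matrix (Fin 3) (Fin 3) ℤ) 1 0).natAbs ≤ n := by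
          rw [c10]
          have := natAbs_emod_lt ((B : Matrix (Fin 3) (Fin 3) ℤ) 0 0) h10
          omega
        have hCN : C ∈ N := ih C hlt c20
        have : (W2 q)⁻¹ * C ∈ N := mul_mem (inv_mem (hW2 q)) hCN
        simpa [hC] using this

/-- Stage 1: Euclidean algorithm making `B 2 0 = 0`. -/
lemma stage1 : ∀ (n : ℕ) (B : G), ((B : Matrix (Fin 3) (Fin 3) ℤ) 2 0).natAbs ≤ n → B ∈ N := by
  intro n
  induction n with
  | zero =>
      intro B hle
      exact stage2 _ B le_rfl (by omega)
  | succ n ih =>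
      intro B hle
      by_cases h20 : (B : Matrix (Fin 3) (Fin 3) ℤ) 2 0 = 0
      · exact stage2 _ B le_rfl h20
      · set q : ℤ := (B : Matrix (Fin 3) (Fin 3) ℤ) 0 0 / (B : Matrix (Fin 3) (Fin 3) ℤ) 2 0
          with hq
        set C : G := W1 q * B with hC
        have entry : ∀ i j, (C : Matrix (Fin 3) (Fin 3) ℤ) i j =
            (!![0, 0, 1; 0, 1, 0; -1, 0, q] * (B : Matrix (Fin 3) (Fin 3) ℤ)) i j := by
          intro i j
          rw [hC, Matrix.SpecialLinearGroup.coe_mul]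
          rfl
        have c20 : (C : Matrix (Fin 3) (Fin 3) ℤ) 2 0 =
            -((B : Matrix (Fin 3) (Fin 3) ℤ) 0 0 % (B : Matrix (Fin 3) (Fin 3) ℤ) 2 0) := by
          rw [entry]
          simp [Matrix.mul_apply, Fin.sum_univ_three, Matrix.vecHead, Matrix.vecTail]
          rw [hq]
          linear_combination Int.mul_ediv_add_emod ((B : Matrix (Fin 3) (Fin 3) ℤ) 0 0)
            ((B : Matrix (Fin 3) (Fin 3) ℤ) 2 0)
        have hlt : ((C : Matrix (Fin 3) (Fin 3) ℤ) 2 0).natAbs ≤ n := by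
          rw [c20]
          have := natAbs_emod_lt ((B : Matrix (Fin 3) (Fin 3) ℤ) 0 0) h20
          omega
        have hCN : C ∈ N := ih C hlt
        have : (W1 q)⁻¹ * C ∈ N := mul_mem (inv_mem (hW1 q)) hCN
        simpa [hC] using this

lemma mem_all (A : G) : A ∈ N := stage1 _ A le_rfl

end SL3NCAux

/-- The normal closure in `SL(3,ℤ)` of the cyclic subgroup of order 3 generated by the
permutation matrix of the 3-cycle is all of `SL(3,ℤ)`. -/
theorem normalClosure_of_threeCycle_matrix_eq_top :
    Subgroup.normalClosure ({threeCycleSL3} : Set (Matrix.SpecialLinearGroup (Fin 3) ℤ)) = ⊤ := by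
  rw [eq_top_iff]
  intro A _
  exact SL3NCAux.mem_all A
end

section
/- If Γ₀ and Γ₁ are infinite groups, then the free product Γ₀ * Γ₁ is an ICC group: every element other than the identity has an infinite conjugacy class. -/
open Monoid CoprodI

section Key

variable {ι : Type*} [DecidableEq ι] {G : ι → Type*} [∀ i, Group (G i)] [∀ i, DecidableEq (G i)]

theorem word_prod_injective :
    Function.Injective (CoprodI.Word.prod : CoprodI.Word G → CoprodI G) := by
  intro w1 w2 h
  have : (CoprodI.Word.equiv (M := G)).symm w1 = (CoprodI.Word.equiv (M := G)).symm w2 := h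
  exact (CoprodI.Word.equiv (M := G)).symm.injective this

theorem word_prod_equiv (x : CoprodI G) : (CoprodI.Word.equiv x).prod = x :=
  (CoprodI.Word.equiv (M := G)).left_inv x

theorem key_aux (i : ι) : ∀ (n : ℕ) (w : CoprodI.Word G) (a a' : G i),
    w.toList.length ≤ n → a ≠ 1 → CoprodI.of a' * w.prod = w.prod * CoprodI.of a →
    ∃ b : G i, w.prod = CoprodI.of b := by
  intro n
  induction n with
  | zero =>
    intro w a a' hlen _ _
    have hnil : w.toList = [] := List.length_eq_zero_iff.mp (Nat.le_zero.mp hlen)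
    refine ⟨1, ?_⟩
    rw [map_one]
    show (w.toList.map fun l => CoprodI.of l.snd).prod = 1
    rw [hnil]; rfl
  | succ n ih =>
    intro w a a' hlen ha hc
    rcases hL : w.toList with _ | ⟨⟨j, m⟩, T⟩
    · refine ⟨1, ?_⟩
      rw [map_one]
      show (w.toList.map fun l => CoprodI.of l.snd).prod = 1
      rw [hL]; rfl
    · have hm : m ≠ 1 := w.ne_one _ (by rw [hL]; exact List.mem_cons_self)
      -- the tail word
      have hchainT : T.Chain' (fun l l' => l.fst ≠ l'.fst) := by
        have := w.chain_ne; rw [hL] at this; exact this.tail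
      let wt : CoprodI.Word G :=
        ⟨T, fun l hl => w.ne_one l (by rw [hL]; exact List.mem_cons_of_mem _ hl), hchainT⟩
      have hwprod : w.prod = CoprodI.of m * wt.prod := by
        show (w.toList.map fun l => CoprodI.of l.snd).prod
          = CoprodI.of m * (T.map fun l => CoprodI.of l.snd).prod
        rw [hL, List.map_cons, List.prod_cons]
      by_cases hji : j = i
      · subst hji
        have hc' : CoprodI.of (m⁻¹ * a' * m) * wt.prod = wt.prod * CoprodI.of a := by
          have := hc
          rw [hwprod] at this
          calc CoprodI.of (m⁻¹ * a' * m) * wt.prod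
              = (CoprodI.of m)⁻¹ * (CoprodI.of a' * (CoprodI.of m * wt.prod)) := by
                simp [map_mul, mul_assoc]
            _ = (CoprodI.of m)⁻¹ * (CoprodI.of m * wt.prod * CoprodI.of a) := by rw [this]
            _ = wt.prod * CoprodI.of a := by simp [mul_assoc]
        have hlenT : T.length ≤ n := by
          have : T.length + 1 ≤ n + 1 := by
            rw [← List.length_cons (a := (⟨j, m⟩ : Σ i, G i)) (as := T), ← hL]; exact hlen
          omega
        obtain ⟨b, hb⟩ := ih wt a (m⁻¹ * a' * m) hlenT ha hc'
        by_cases hb1 : b = 1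
        · exact ⟨m, by rw [hwprod, hb, hb1, map_one, mul_one]⟩
        · exfalso
          -- wt.prod = of b with b ≠ 1 : wt is the single-letter word ⟨j, b⟩
          have hfe : (CoprodI.Word.empty : CoprodI.Word G).fstIdx ≠ some j := by
            simp [CoprodI.Word.fstIdx, CoprodI.Word.empty]
          have hcons : (CoprodI.Word.cons b CoprodI.Word.empty hfe hb1).prod = CoprodI.of b := by
            rw [CoprodI.Word.prod_cons]; simp
          have : wt = CoprodI.Word.cons b CoprodI.Word.empty hfe hb1 :=
            word_prod_injective (by rw [hb, hcons])
          have hT : T = [⟨j, b⟩] := by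
            have := congrArg CoprodI.Word.toList this
            simpa [CoprodI.Word.cons, CoprodI.Word.empty] using this
          have := w.chain_ne
          rw [hL, hT] at this
          exact (List.isChain_cons_cons.mp this).1 rfl
      · -- j ≠ i : contradiction
        exfalso
        have ha' : a' ≠ 1 := by
          rintro rfl
          rw [map_one, one_mul] at hc
          have : CoprodI.of a = (1 : CoprodI G) := left_eq_mul.mp hc
          exact ha (CoprodI.of_injective i (by rw [this, map_one]))
        have hfst : w.fstIdx ≠ some i := by
          simp only [CoprodI.Word.fstIdx, hL, List.head?_cons, Option.map_some]
          exact fun h => hji (Option.some_injective _ h)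
        -- LHS word
        set wl : CoprodI.Word G := CoprodI.Word.cons a' w hfst ha' with hwl
        have hwlprod : wl.prod = CoprodI.of a' * w.prod := CoprodI.Word.prod_cons i a' w ha' hfst
        have hwllist : wl.toList = ⟨i, a'⟩ :: w.toList := rfl
        -- decompose w.toList from the right
        rcases List.eq_nil_or_concat w.toList with hnil | ⟨I, ⟨k, p⟩, hI⟩
        · rw [hnil] at hL; cases hL
        rw [List.concat_eq_append] at hI
        have hchain := w.chain_ne
        rw [hI] at hchain
        obtain ⟨cI, _, clast⟩ := List.isChain_append.mp hchain
        by_cases hk : k = i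
        · subst hk
          let wI : CoprodI.Word G :=
            ⟨I, fun l hl => w.ne_one l (by rw [hI]; exact List.mem_append_left _ hl), cI⟩
          have hsplit : w.prod = wI.prod * CoprodI.of p := by
            show (w.toList.map fun l => CoprodI.of l.snd).prod
              = (I.map fun l => CoprodI.of l.snd).prod * CoprodI.of p
            rw [hI, List.map_append, List.prod_append]; simp
          by_cases hpa : p * a = 1
          · have hprodeq : wl.prod = wI.prod := by
              rw [hwlprod, hc, hsplit, mul_assoc, ← map_mul, hpa, map_one, mul_one]
            have := congrArg (fun w => (CoprodI.Word.toList w).length) (word_prod_injective hprodeq)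
            simp only [hwllist] at this
            rw [hI] at this
            simp only [wI, List.length_cons, List.length_append, List.length_singleton] at this
            omega
          · let w2 : CoprodI.Word G :=
              { toList := I ++ [⟨k, p * a⟩],
                ne_one := fun l hl => by
                 rcases List.mem_append.mp hl with hl | hl
                 · exact w.ne_one l (by rw [hI]; exact List.mem_append_left _ hl)
                 · rw [List.mem_singleton.mp hl]; exact hpa,
                chain_ne := List.isChain_append.mpr ⟨cI, List.isChain_singleton _, by
                 intro x hx y hy
                 rw [List.head?_cons, Option.mem_some_iff] at hy
                 have := clast x hx (⟨k, p⟩ : Σ i, G i) (by simp)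
                 rw [← hy]; exact this⟩ }
            have hw2prod : w2.prod = wI.prod * CoprodI.of (p * a) := by
              show ((I ++ [(⟨k, p * a⟩ : Σ i, G i)]).map fun l => CoprodI.of l.snd).prod
                = (I.map fun l => CoprodI.of l.snd).prod * CoprodI.of (p * a)
              rw [List.map_append, List.prod_append]; simp
            have hprodeq : wl.prod = w2.prod := by
              rw [hwlprod, hc, hsplit, hw2prod, map_mul, mul_assoc]
            have := congrArg (fun w => (CoprodI.Word.toList w).length) (word_prod_injective hprodeq)
            simp only [hwllist] at this
            rw [hI] at this
            simp [w2] at this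
        · let w2 : CoprodI.Word G :=
            { toList := w.toList ++ [⟨i, a⟩],
              ne_one := fun l hl => by
               rcases List.mem_append.mp hl with hl | hl
               · exact w.ne_one l hl
               · rw [List.mem_singleton.mp hl]; exact ha,
              chain_ne := List.isChain_append.mpr ⟨w.chain_ne, List.isChain_singleton _, by
               intro x hx y hy
               rw [List.head?_cons, Option.mem_some_iff] at hy
               rw [hI, List.getLast?_concat, Option.mem_some_iff] at hx
               rw [← hy, ← hx]; exact hk⟩ }
          have hw2prod : w2.prod = w.prod * CoprodI.of a := by
            show ((w.toList ++ [(⟨i, a⟩ : Σ i, G i)]).map fun l => CoprodI.of l.snd).prod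
              = (w.toList.map fun l => CoprodI.of l.snd).prod * CoprodI.of a
            rw [List.map_append, List.prod_append]; simp
          have hprodeq : wl.prod = w2.prod := by rw [hwlprod, hc, hw2prod]
          have hlist := congrArg CoprodI.Word.toList (word_prod_injective hprodeq)
          rw [hwllist] at hlist
          have : w2.toList = w.toList ++ [⟨i, a⟩] := rfl
          rw [this, hL] at hlist
          simp only [List.cons_append] at hlist
          have := (List.cons.injEq _ _ _ _).mp hlist
          exact hji (congrArg Sigma.fst this.1.symm)

end Key

section Key2

variable {ι : Type*} [DecidableEq ι] {G : ι → Type*} [∀ i, Group (G i)]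

theorem of_eq_of_ne {i j : ι} (hij : i ≠ j) {x : G i} {y : G j}
    (h : (CoprodI.of x : CoprodI G) = CoprodI.of y) : x = 1 := by
  have := congrArg (CoprodI.lift (Pi.mulSingle i (MonoidHom.id (G i)))) h
  rw [CoprodI.lift_of, CoprodI.lift_of, Pi.mulSingle_eq_same,
    Pi.mulSingle_eq_of_ne (Ne.symm hij)] at this
  simpa using this

end Key2

theorem coprodI_bool_icc {G : Bool → Type*} [∀ b, Group (G b)] [∀ b, Infinite (G b)]
    (g : CoprodI G) (hg : g ≠ 1) : (Set.range fun h => h * g * h⁻¹).Infinite := by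
  classical
  have key : ∀ (i : Bool) (a : G i), a ≠ 1 → CoprodI.of a * g = g * CoprodI.of a →
      ∃ b : G i, g = CoprodI.of b := by
    intro i a ha hcomm
    obtain ⟨b, hb⟩ := key_aux i (CoprodI.Word.equiv g).toList.length (CoprodI.Word.equiv g) a a
      le_rfl ha (by rw [word_prod_equiv]; exact hcomm)
    exact ⟨b, by rw [← word_prod_equiv g, hb]⟩
  have hex : ∃ i : Bool, ∀ m : G i, CoprodI.of m * g = g * CoprodI.of m → m = 1 := by
    by_contra hcon
    push_neg at hcon
    obtain ⟨a, ha, ha1⟩ := hcon false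
    obtain ⟨b, hb, hb1⟩ := hcon true
    obtain ⟨c, hcb⟩ := key false a ha1 ha
    obtain ⟨d, hdb⟩ := key true b hb1 hb
    have hc1 : c = 1 := of_eq_of_ne (by decide : (false : Bool) ≠ true) (hcb ▸ hdb)
    rw [hcb, hc1, map_one] at hg
    exact hg rfl
  obtain ⟨i, hi⟩ := hex
  have hinj : Function.Injective (fun m : G i => CoprodI.of m * g * (CoprodI.of m)⁻¹) := by
    intro m m' h
    simp only at h
    have h2 : CoprodI.of (m'⁻¹ * m) * g = g * CoprodI.of (m'⁻¹ * m) := by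
      have := congrArg (fun z => (CoprodI.of m')⁻¹ * z * CoprodI.of m) h
      simp only [map_mul, map_inv] at this ⊢
      calc (CoprodI.of m')⁻¹ * CoprodI.of m * g
          = (CoprodI.of m')⁻¹ * (CoprodI.of m * g * (CoprodI.of m)⁻¹) * CoprodI.of m := by group
        _ = (CoprodI.of m')⁻¹ * (CoprodI.of m' * g * (CoprodI.of m')⁻¹) * CoprodI.of m := by
            rw [h]
        _ = g * ((CoprodI.of m')⁻¹ * CoprodI.of m) := by group
    have := hi _ h2
    have : m' = m := inv_mul_eq_one.mp this
    exact this.symm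
  have h1 : (Set.range fun m : G i => CoprodI.of m * g * (CoprodI.of m)⁻¹).Infinite :=
    Set.infinite_range_of_injective hinj
  apply Set.Infinite.mono _ h1
  rintro _ ⟨m, rfl⟩
  exact ⟨CoprodI.of m, rfl⟩

section Transfer

universe u v

variable (Γ₀ : Type u) (Γ₁ : Type v) [Group Γ₀] [Group Γ₁]

def myFac : Bool → Type (max u v) := fun b => Bool.rec (ULift.{v} Γ₀) (ULift.{u} Γ₁) b

instance (b : Bool) : Group (myFac Γ₀ Γ₁ b) := by
  cases b
  · exact inferInstanceAs (Group (ULift Γ₀))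
  · exact inferInstanceAs (Group (ULift Γ₁))

instance [Infinite Γ₀] [Infinite Γ₁] (b : Bool) : Infinite (myFac Γ₀ Γ₁ b) := by
  cases b
  · exact inferInstanceAs (Infinite (ULift Γ₀))
  · exact inferInstanceAs (Infinite (ULift Γ₁))

def myToI : Coprod Γ₀ Γ₁ →* CoprodI (myFac Γ₀ Γ₁) :=
  Coprod.lift
    ((CoprodI.of (M := myFac Γ₀ Γ₁) (i := false)).comp
      (MulEquiv.ulift.symm : Γ₀ ≃* ULift Γ₀).toMonoidHom)
    ((CoprodI.of (M := myFac Γ₀ Γ₁) (i := true)).comp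
      (MulEquiv.ulift.symm : Γ₁ ≃* ULift Γ₁).toMonoidHom)

def myFromI : CoprodI (myFac Γ₀ Γ₁) →* Coprod Γ₀ Γ₁ :=
  CoprodI.lift (fun b => Bool.rec (motive := fun b => myFac Γ₀ Γ₁ b →* Coprod Γ₀ Γ₁)
    ((Coprod.inl : Γ₀ →* Coprod Γ₀ Γ₁).comp (MulEquiv.ulift.toMonoidHom))
    ((Coprod.inr : Γ₁ →* Coprod Γ₀ Γ₁).comp (MulEquiv.ulift.toMonoidHom)) b)

def myEquivI : Coprod Γ₀ Γ₁ ≃* CoprodI (myFac Γ₀ Γ₁) :=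
  MonoidHom.toMulEquiv (myToI Γ₀ Γ₁) (myFromI Γ₀ Γ₁)
    (by
      apply Coprod.hom_ext
      · ext x
        simp [myToI, myFromI, Coprod.lift_apply_inl, CoprodI.lift_of,
          MulEquiv.apply_symm_apply, MulEquiv.symm_apply_apply]
        rfl
      · ext x
        simp [myToI, myFromI, Coprod.lift_apply_inr, CoprodI.lift_of,
          MulEquiv.apply_symm_apply, MulEquiv.symm_apply_apply]
        rfl)
    (by
      apply CoprodI.ext_hom
      intro b
      cases b
      · ext x
        simp [myToI, myFromI, Coprod.lift_apply_inl, CoprodI.lift_of,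
          MulEquiv.apply_symm_apply, MulEquiv.symm_apply_apply]
        rfl
      · ext x
        simp [myToI, myFromI, Coprod.lift_apply_inr, CoprodI.lift_of,
          MulEquiv.apply_symm_apply, MulEquiv.symm_apply_apply]
        rfl)

end Transfer

/-- The free product of two infinite groups is ICC: every non-identity element has an
infinite conjugacy class. -/
theorem freeProduct_of_infinite_groups_is_ICC
    (Γ₀ Γ₁ : Type*) [Group Γ₀] [Group Γ₁] [Infinite Γ₀] [Infinite Γ₁] :
    ∀ g : Monoid.Coprod Γ₀ Γ₁, g ≠ 1 →
      (Set.range fun h : Monoid.Coprod Γ₀ Γ₁ => h * g * h⁻¹).Infinite := by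
  intro g hg
  set e := myEquivI Γ₀ Γ₁ with he
  have hge : e g ≠ 1 := fun h => hg (e.injective (by rw [h, map_one]))
  have hinf := coprodI_bool_icc (e g) hge
  have himg := hinf.image (e.symm.injective.injOn)
  apply Set.Infinite.mono _ himg
  rintro _ ⟨_, ⟨h', rfl⟩, rfl⟩
  refine ⟨e.symm h', ?_⟩
  simp [map_mul, map_inv]
end

section
/- Let π be a unitary representation of a group G on a Hilbert space H, let P be the orthogonal projection of H onto the subspace of G-fixed vectors {ξ : π(g)ξ = ξ for all g ∈ G}, and let ξ ∈ H. If η is an element of minimal norm in the closed convex hull C of the orbit {π(g)ξ : g ∈ G}, then η = Pξ; in particular such a minimal-norm element exists, is unique, and is G-fixed. -/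
/-- Let `π` be a unitary representation of a group `G` on a complex Hilbert space `H`, and
let `K` be the subspace of `G`-fixed vectors. For `ξ ∈ H`, any element of minimal norm in
the closed convex hull `C` of the orbit `{π(g)ξ}` is the orthogonal projection of `ξ` onto
`K` (i.e. it lies in `K` and `ξ - η ⊥ K`); in particular such a minimal-norm element exists,
is unique, and is `G`-fixed. -/
theorem minimal_norm_element_of_orbit_hull_is_projection
    (G : Type*) [Group G]
    (H : Type*) [NormedAddCommGroup H] [InnerProductSpace ℂ H] [CompleteSpace H]
    (π : G →* (H ≃ₗᵢ[ℂ] H))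
    (K : Submodule ℂ H) (hK : ∀ ζ : H, ζ ∈ K ↔ ∀ g : G, π g ζ = ζ)
    (ξ : H) :
    (∀ η ∈ closure (convexHull ℝ (Set.range fun g : G => π g ξ)),
       (∀ ζ ∈ closure (convexHull ℝ (Set.range fun g : G => π g ξ)), ‖η‖ ≤ ‖ζ‖) →
       η ∈ K ∧ ξ - η ∈ Kᗮ) ∧
    (∃! η : H, η ∈ closure (convexHull ℝ (Set.range fun g : G => π g ξ)) ∧
       ∀ ζ ∈ closure (convexHull ℝ (Set.range fun g : G => π g ξ)), ‖η‖ ≤ ‖ζ‖) := by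
  set S : Set H := Set.range fun g : G => π g ξ with hS
  set C : Set H := closure (convexHull ℝ S) with hC
  have hCconv : Convex ℝ C := (convex_convexHull ℝ S).closure
  have hCne : C.Nonempty := ⟨π 1 ξ, subset_closure (subset_convexHull ℝ S ⟨1, rfl⟩)⟩
  -- uniqueness of a minimal norm element
  have huniq : ∀ η₁ ∈ C, ∀ η₂ ∈ C, (∀ ζ ∈ C, ‖η₁‖ ≤ ‖ζ‖) → (∀ ζ ∈ C, ‖η₂‖ ≤ ‖ζ‖) →
      η₁ = η₂ := by
    intro η₁ h1 η₂ h2 m1 m2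
    have hm : (1/2 : ℝ) • η₁ + (1/2 : ℝ) • η₂ ∈ C :=
      hCconv h1 h2 (by norm_num) (by norm_num) (by norm_num)
    have heq : ‖η₁‖ = ‖η₂‖ := le_antisymm (m1 _ h2) (m2 _ h1)
    have h4 : ‖η₁‖ ≤ ‖(1/2 : ℝ) • η₁ + (1/2 : ℝ) • η₂‖ := m1 _ hm
    have hkey : 2 * ‖η₁‖ ≤ ‖η₁ + η₂‖ := by
      have he : (1/2 : ℝ) • η₁ + (1/2 : ℝ) • η₂ = (1/2 : ℝ) • (η₁ + η₂) := by
        rw [smul_add]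
      rw [he, norm_smul] at h4
      simp only [Real.norm_eq_abs] at h4
      rw [abs_of_nonneg (by norm_num : (0:ℝ) ≤ 1/2)] at h4
      linarith
    have hpar := parallelogram_law_with_norm ℂ η₁ η₂
    have hd : ‖η₁ - η₂‖ = 0 := by
      nlinarith [norm_nonneg (η₁ - η₂), norm_nonneg (η₁ + η₂), norm_nonneg η₁]
    exact sub_eq_zero.mp (norm_eq_zero.mp hd)
  -- the orbit and hence C is invariant under each π g
  have hCinv : ∀ g : G, ∀ v ∈ C, π g v ∈ C := by
    intro g v hv
    have hSinv : (π g) '' S ⊆ S := by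
      rintro _ ⟨_, ⟨h, rfl⟩, rfl⟩
      exact ⟨g * h, by simp [map_mul]⟩
    have himg : (π g) '' C ⊆ C := by
      have h1 : (π g) '' closure (convexHull ℝ S) ⊆ closure ((π g) '' convexHull ℝ S) :=
        image_closure_subset_closure_image (π g).toLinearIsometry.continuous
      have h2 : (π g) '' convexHull ℝ S = convexHull ℝ ((π g) '' S) :=
        ((π g).toLinearEquiv.toLinearMap.restrictScalars ℝ).image_convexHull S
      refine fun x hx => ?_
      have := h1 hx
      rw [h2] at this
      exact closure_mono (convexHull_mono hSinv) this
    exact himg ⟨v, hv, rfl⟩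
  constructor
  · -- a minimal norm element is the projection
    intro η hη hmin
    have hηK : η ∈ K := by
      rw [hK]
      intro g
      have hmem : π g η ∈ C := hCinv g η hη
      have hnorm : ∀ ζ ∈ C, ‖π g η‖ ≤ ‖ζ‖ := by
        intro ζ hζ
        rw [(π g).norm_map]
        exact hmin ζ hζ
      exact (huniq _ hmem _ hη hnorm hmin).symm ▸ rfl
    refine ⟨hηK, ?_⟩
    rw [Submodule.mem_orthogonal]
    intro ζ hζ
    -- the inner product with a fixed vector is constant on the orbit
    have hconst : ∀ v ∈ C, inner ℂ ζ v = (inner ℂ ζ ξ : ℂ) := by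
      intro v hv
      have hT : C ⊆ (innerSL ℂ ζ : H →L[ℂ] ℂ) ⁻¹' {(inner ℂ ζ ξ : ℂ)} := by
        apply closure_minimal
        · apply convexHull_min
          · rintro _ ⟨g, rfl⟩
            have h1 : (inner ℂ ζ (π g ξ) : ℂ) = inner ℂ (π g ζ) (π g ξ) := by
              rw [(hK ζ).mp hζ g]
            simp only [Set.mem_preimage, Set.mem_singleton_iff, innerSL_apply_apply]
            rw [h1, (π g).inner_map_map]
          · exact (convex_singleton _).linear_preimage
              ((innerSL ℂ ζ : H →L[ℂ] ℂ).toLinearMap.restrictScalars ℝ)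
        · exact (isClosed_singleton).preimage (innerSL ℂ ζ).continuous
      exact hT hv
    have : (inner ℂ ζ η : ℂ) = inner ℂ ζ ξ := hconst η hη
    rw [inner_sub_right, this, sub_self]
  · -- existence and uniqueness of a minimal norm element
    obtain ⟨v, hvC, hv⟩ : ∃ v ∈ C, ‖(0:H) - v‖ = ⨅ w : C, ‖(0:H) - w‖ := by
      letI : InnerProductSpace ℝ H := InnerProductSpace.rclikeToReal ℂ H
      exact exists_norm_eq_iInf_of_complete_convex hCne (isClosed_closure.isComplete) hCconv 0
    have hbdd : BddBelow (Set.range fun w : C => ‖(0 : H) - w‖) :=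
      ⟨0, by rintro _ ⟨w, rfl⟩; exact norm_nonneg _⟩
    have hvmin : ∀ ζ ∈ C, ‖v‖ ≤ ‖ζ‖ := by
      intro ζ hζ
      have h1 : (⨅ w : C, ‖(0:H) - w‖) ≤ ‖(0:H) - ζ‖ := ciInf_le hbdd ⟨ζ, hζ⟩
      rw [← hv] at h1
      simpa using h1
    refine ⟨v, ⟨hvC, hvmin⟩, ?_⟩
    rintro w ⟨hwC, hwmin⟩
    exact huniq w hwC v hvC hwmin hvmin
end
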